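/- Define the free genus of a finite group G as the minimal genus of a closed orientable surface admitting a free orientation-preserving G-action. If r is the minimal number of generators of G, then ([(r+1)/2] - 1)·|G| + 1 ≤ free genus of G ≤ (r-1)·|G| + 1, where [x] denotes the floor function. -/

import Mathlib

open scoped commutatorElement

/-- The single defining relation `[x_1,y_1] ⋯ [x_n,y_n]` of the genus-`n` surface group. -/
def surfaceRel (n : ℕ) : FreeGroup (Fin n ⊕ Fin n) :=
  (List.ofFn fun i : Fin n =>
    ⁅(FreeGroup.of (Sum.inl i) : FreeGroup (Fin n ⊕ Fin n)), FreeGroup.of (Sum.inr i)⁆).prod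

/-- The fundamental group of the closed orientable surface of genus `n`. -/
abbrev SurfaceGroup (n : ℕ) : Type :=
  PresentedGroup ({surfaceRel n} : Set (FreeGroup (Fin n ⊕ Fin n)))

/-- The set of genera `m` of closed orientable surfaces admitting a free
orientation-preserving `G`-action: a free `G`-action on a genus-`m` surface is
equivalent to a regular covering `Σ_m → Σ_n` with deck group `G`, i.e. to a
surjection `π₁(Σ_n) ↠ G`, together with the Riemann–Hurwitz relation
`m - 1 = |G| * (n - 1)`. -/
def freeGenusSet (G : Type*) [Group G] [Fintype G] : Set ℕ :=
  {m : ℕ | ∃ n : ℕ, (m : ℤ) - 1 = (Fintype.card G : ℤ) * ((n : ℤ) - 1) ∧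
    ∃ φ : SurfaceGroup n →* G, Function.Surjective φ}

/-- The free genus of a finite group `G`: the minimal genus of a closed orientable
surface admitting a free orientation-preserving `G`-action. -/
noncomputable def freeGenus (G : Type*) [Group G] [Fintype G] : ℕ :=
  sInf (freeGenusSet G)

lemma surface_lift_eq_one {n : ℕ} {G : Type*} [Group G] (c : Fin n → G) :
    ∀ rel ∈ ({surfaceRel n} : Set (FreeGroup (Fin n ⊕ Fin n))),
      FreeGroup.lift (Sum.elim c c) rel = 1 := by
  intro rel hrel
  rw [Set.mem_singleton_iff] at hrel
  subst hrel
  unfold surfaceRel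
  rw [map_list_prod, List.map_ofFn]
  apply List.prod_eq_one
  intro x hx
  simp only [List.mem_ofFn] at hx
  obtain ⟨i, rfl⟩ := hx
  simp [map_commutatorElement]

lemma mem_freeGenusSet {G : Type*} [Group G] [Fintype G] (r : ℕ) (hr1 : 1 ≤ r)
    (c : Fin r → G) (hc : Subgroup.closure (Set.range c) = ⊤) :
    (r - 1) * Fintype.card G + 1 ∈ freeGenusSet G := by
  refine ⟨r, ?_, PresentedGroup.toGroup (surface_lift_eq_one c), ?_⟩
  · push_cast [Nat.cast_sub hr1]
    ring
  · rw [← MonoidHom.range_eq_top, ← top_le_iff, ← hc]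
    refine (Subgroup.closure_le _).2 ?_
    rintro _ ⟨i, rfl⟩
    exact ⟨PresentedGroup.of (Sum.inl i), by simp [PresentedGroup.toGroup.of]⟩

lemma gens_of_surj {G : Type*} [Group G] [Fintype G] {n : ℕ}
    (φ : SurfaceGroup n →* G) (hφ : Function.Surjective φ) :
    ∃ c : Fin (n + n) → G, Subgroup.closure (Set.range c) = ⊤ := by
  refine ⟨(φ ∘ (PresentedGroup.of : Fin n ⊕ Fin n → SurfaceGroup n)) ∘ finSumFinEquiv.symm, ?_⟩
  rw [Function.Surjective.range_comp finSumFinEquiv.symm.surjective,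
    Set.range_comp, ← MonoidHom.map_closure, PresentedGroup.closure_range_of,
    ← MonoidHom.range_eq_map, MonoidHom.range_eq_top]
  exact hφ

/-- If `r` is the minimal number of generators of the nontrivial finite group `G`, then
`([(r+1)/2] - 1)·|G| + 1 ≤ free genus of G ≤ (r-1)·|G| + 1`. -/
theorem freeGenus_bounds (G : Type*) [Group G] [Fintype G] [Nontrivial G] (r : ℕ)
    (hr : IsLeast {k : ℕ | ∃ c : Fin k → G, Subgroup.closure (Set.range c) = ⊤} r) :
    ((r + 1) / 2 - 1) * Fintype.card G + 1 ≤ freeGenus G ∧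
      freeGenus G ≤ (r - 1) * Fintype.card G + 1 := by
  obtain ⟨c, hc⟩ := hr.1
  have hr1 : 1 ≤ r := by
    rcases Nat.eq_zero_or_pos r with h | h
    · exfalso
      subst h
      have : Set.range c = ∅ := by
        rw [Set.range_eq_empty_iff]; exact inferInstance
      rw [this, Subgroup.closure_empty] at hc
      exact bot_ne_top hc
    · exact h
  have hmem := mem_freeGenusSet r hr1 c hc
  have hne : (freeGenusSet G).Nonempty := ⟨_, hmem⟩
  constructor
  · -- lower bound: sInf is a member, bound all members
    have hsp := Nat.sInf_mem hne
    obtain ⟨n, heq, φ, hφ⟩ := hsp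
    have hcard : 2 ≤ Fintype.card G := Fintype.one_lt_card
    have hn1 : 1 ≤ n := by
      by_contra h
      push_neg at h
      interval_cases n
      simp at heq
      omega
    have hrle : r ≤ n + n := hr.2 (gens_of_surj φ hφ)
    have hm : sInf (freeGenusSet G) = (n - 1) * Fintype.card G + 1 := by
      have h2 : ((sInf (freeGenusSet G) : ℕ) : ℤ) =
          ((n - 1 : ℕ) : ℤ) * (Fintype.card G : ℤ) + 1 := by
        rw [Nat.cast_sub hn1]
        push_cast
        linarith [heq]
      exact_mod_cast h2
    rw [freeGenus, hm]
    have : (r + 1) / 2 - 1 ≤ n - 1 := by omega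
    exact Nat.add_le_add_right (Nat.mul_le_mul_right _ this) 1
  · exact Nat.sInf_le hmem
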